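/- Let A be a finite nonempty set, π_t a strictly positive probability mass function on A, Q : A → ℝ, and α, β > 0 with target distribution r strictly positive. Let π_{t+1}(a) ∝ r(a)^{α/(α+β)}·π_t(a)^{β/(α+β)}·exp(Q(a)/(α+β)). Then as β → ∞ (with α, Q, r, π_t fixed), π_{t+1}(a) → π_t(a) for every a ∈ A. -/

import Mathlib

open Real Finset Filter

theorem trust_region_limit_beta
    {A : Type*} [Fintype A] [Nonempty A]
    (πt r : A → ℝ) (hπt : ∀ a, 0 < πt a) (hπt1 : ∑ a, πt a = 1)
    (hr : ∀ a, 0 < r a) (hr1 : ∑ a, r a = 1)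
    (Q : A → ℝ) (α : ℝ) (hα : 0 < α)
    (πnext : ℝ → A → ℝ)
    (hπnext : ∀ β a, πnext β a =
      (r a) ^ (α / (α + β)) * (πt a) ^ (β / (α + β)) * Real.exp (Q a / (α + β))
        / ∑ a', (r a') ^ (α / (α + β)) * (πt a') ^ (β / (α + β)) *
            Real.exp (Q a' / (α + β))) :
    ∀ a, Filter.Tendsto (fun β => πnext β a) Filter.atTop (nhds (πt a)) := by
  have hs : Tendsto (fun β : ℝ => α + β) atTop atTop :=
    tendsto_atTop_add_const_left _ _ tendsto_id
  have hdiv : ∀ c : ℝ, Tendsto (fun β => c / (α + β)) atTop (nhds 0) :=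
    fun c => Tendsto.div_atTop tendsto_const_nhds hs
  have hexp1 : Tendsto (fun β => β / (α + β)) atTop (nhds 1) := by
    have h : Tendsto (fun β => 1 - α / (α + β)) atTop (nhds 1) := by
      simpa using tendsto_const_nhds.sub (hdiv α)
    refine h.congr' ?_
    filter_upwards [eventually_gt_atTop (-α + 1)] with β hβ
    have hpos : (0:ℝ) < α + β := by linarith
    field_simp
    ring
  have hf : ∀ b : A, Tendsto (fun β => (r b) ^ (α / (α + β)) * (πt b) ^ (β / (α + β))
      * Real.exp (Q b / (α + β))) atTop (nhds (πt b)) := by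
    intro b
    have h1 : Tendsto (fun β => (r b) ^ (α / (α + β))) atTop (nhds 1) := by
      have hc : ContinuousAt (fun x : ℝ => (r b) ^ x) 0 :=
        Real.continuousAt_const_rpow (hr b).ne'
      have := hc.tendsto.comp (hdiv α)
      simpa [Function.comp_def] using this
    have h2 : Tendsto (fun β => (πt b) ^ (β / (α + β))) atTop (nhds (πt b)) := by
      have hc : ContinuousAt (fun x : ℝ => (πt b) ^ x) 1 :=
        Real.continuousAt_const_rpow (hπt b).ne'
      have := hc.tendsto.comp hexp1
      simpa [Function.comp_def] using this
    have h3 : Tendsto (fun β => Real.exp (Q b / (α + β))) atTop (nhds 1) := by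
      have := (Real.continuous_exp.tendsto 0).comp (hdiv (Q b))
      simpa [Function.comp_def] using this
    have := (h1.mul h2).mul h3
    simpa using this
  have hsum : Tendsto (fun β => ∑ a', (r a') ^ (α / (α + β)) * (πt a') ^ (β / (α + β))
      * Real.exp (Q a' / (α + β))) atTop (nhds 1) := by
    have := tendsto_finset_sum (Finset.univ : Finset A) (fun b _ => hf b)
    simpa [hπt1] using this
  intro a
  have := (hf a).div hsum one_ne_zero
  simp only [hπnext]
  simpa [Pi.div_def] using this
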